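/- Let G be a group generated by a finite set S, with word length |·| with respect to S, and stable norm [[·]] = lim_{n→∞} |g^n| / n. Suppose g ∈ G has infinite order and there exist real constants λ ≥ 1 and ε ≥ 0, an integer k > 0, and a positive integer m such that g^m is conjugate to an element ω ∈ G with |ω| ≥ k and n · |ω| ≤ λ · |ω^n| + ε for all positive integers n. Then [[g]] ≥ k / (λ m). -/

import Mathlib

open Filter Topology

/-- The word length of `g` with respect to a generating set `S`: the infimum of the lengths
of words on `S ∪ S⁻¹` representing `g`. -/
noncomputable def wordLength {G : Type*} [Group G] (S : Set G) (g : G) : ℕ :=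
  sInf {n : ℕ | ∃ l : List G, l.length = n ∧ (∀ x ∈ l, x ∈ S ∨ x⁻¹ ∈ S) ∧ l.prod = g}

lemma exists_word {G : Type*} [Group G] (S : Set G)
    (hgen : Subgroup.closure S = ⊤) (g : G) :
    ∃ l : List G, (∀ x ∈ l, x ∈ S ∨ x⁻¹ ∈ S) ∧ l.prod = g := by
  have hg : g ∈ Subgroup.closure S := by rw [hgen]; trivial
  induction hg using Subgroup.closure_induction with
  | mem x hx => exact ⟨[x], by simpa using Or.inl hx, by simp⟩
  | one => exact ⟨[], by simp, by simp⟩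
  | mul x y hx hy ihx ihy =>
    obtain ⟨lx, hlx, hpx⟩ := ihx
    obtain ⟨ly, hly, hpy⟩ := ihy
    refine ⟨lx ++ ly, ?_, by simp [hpx, hpy]⟩
    intro z hz
    rcases List.mem_append.1 hz with h | h
    exacts [hlx z h, hly z h]
  | inv x hx ihx =>
    obtain ⟨lx, hlx, hpx⟩ := ihx
    refine ⟨(lx.map Inv.inv).reverse, ?_, by rw [← List.prod_inv_reverse, hpx]⟩
    intro z hz
    simp only [List.mem_reverse, List.mem_map] at hz
    obtain ⟨w, hw, rfl⟩ := hz
    rcases hlx w hw with h | h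
    · exact Or.inr (by simpa using h)
    · exact Or.inl h

lemma wordLength_le {G : Type*} [Group G] (S : Set G) (g : G) (l : List G)
    (hl : ∀ x ∈ l, x ∈ S ∨ x⁻¹ ∈ S) (hp : l.prod = g) :
    wordLength S g ≤ l.length :=
  Nat.sInf_le ⟨l, rfl, hl, hp⟩

lemma wordLength_spec {G : Type*} [Group G] (S : Set G)
    (hgen : Subgroup.closure S = ⊤) (g : G) :
    ∃ l : List G, l.length = wordLength S g ∧ (∀ x ∈ l, x ∈ S ∨ x⁻¹ ∈ S) ∧ l.prod = g := by
  obtain ⟨l, h1, h2⟩ := exists_word S hgen g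
  have hne : {n : ℕ | ∃ l : List G, l.length = n ∧ (∀ x ∈ l, x ∈ S ∨ x⁻¹ ∈ S) ∧ l.prod = g}.Nonempty :=
    ⟨l.length, l, rfl, h1, h2⟩
  exact Nat.sInf_mem hne

lemma wordLength_mul_le {G : Type*} [Group G] (S : Set G)
    (hgen : Subgroup.closure S = ⊤) (x y : G) :
    wordLength S (x * y) ≤ wordLength S x + wordLength S y := by
  obtain ⟨lx, hlen, hx1, hx2⟩ := wordLength_spec S hgen x
  obtain ⟨ly, hleny, hy1, hy2⟩ := wordLength_spec S hgen y
  have := wordLength_le S (x * y) (lx ++ ly)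
    (by intro z hz; rcases List.mem_append.1 hz with h | h; exacts [hx1 z h, hy1 z h])
    (by simp [hx2, hy2])
  simpa [hlen, hleny] using this

/-- If `g ∈ G` has infinite order and some positive power `g^m` is conjugate to an element
`ω` with `|ω| ≥ k > 0` satisfying the quasigeodesic inequality
`n ⬝ |ω| ≤ λ ⬝ |ω^n| + ε` for all positive integers `n` (with `λ ≥ 1`, `ε ≥ 0`),
then the stable norm `[[g]] = lim |g^n|/n` satisfies `[[g]] ≥ k / (λ m)`. -/
theorem stableNorm_ge_of_pow_conj_quasigeodesic {G : Type*} [Group G] (S : Set G)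
    (hS : S.Finite) (hgen : Subgroup.closure S = ⊤) (g ω : G)
    (hord : ∀ n : ℕ, 0 < n → g ^ n ≠ 1)
    (lam ε : ℝ) (hlam : 1 ≤ lam) (hε : 0 ≤ ε) (k : ℤ) (hk : 0 < k)
    (m : ℕ) (hm : 0 < m)
    (hconj : ∃ a : G, g ^ m = a * ω * a⁻¹)
    (hlen : (k : ℝ) ≤ (wordLength S ω : ℝ))
    (hquasi : ∀ n : ℕ, 1 ≤ n →
      (n : ℝ) * (wordLength S ω : ℝ) ≤ lam * (wordLength S (ω ^ n) : ℝ) + ε)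
    (l : ℝ)
    (hl : Tendsto (fun n : ℕ => (wordLength S (g ^ n) : ℝ) / n) atTop (𝓝 l)) :
    l ≥ (k : ℝ) / (lam * m) := by
  obtain ⟨a, ha⟩ := hconj
  have hlam0 : (0:ℝ) < lam := lt_of_lt_of_le one_pos hlam
  set c1 : ℝ := (wordLength S a⁻¹ : ℝ) with hc1
  set c2 : ℝ := (wordLength S a : ℝ) with hc2
  set C : ℝ := ε + lam * (c1 + c2) with hC
  have hc1' : 0 ≤ c1 := Nat.cast_nonneg _
  have hc2' : 0 ≤ c2 := Nat.cast_nonneg _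
  -- ω ^ j = a⁻¹ * g ^ (m * j) * a
  have hpow : ∀ j : ℕ, ω ^ j = a⁻¹ * g ^ (m * j) * a := by
    intro j
    have : g ^ (m * j) = a * ω ^ j * a⁻¹ := by
      rw [pow_mul, ha, conj_pow]
    rw [this]; group
  -- word length bound
  have hWbound : ∀ j : ℕ, (wordLength S (ω ^ j) : ℝ)
      ≤ c1 + (wordLength S (g ^ (m * j)) : ℝ) + c2 := by
    intro j
    have h1 : wordLength S (ω ^ j) ≤ wordLength S (a⁻¹ * g ^ (m * j)) + wordLength S a := by
      rw [hpow j]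
      exact wordLength_mul_le S hgen _ _
    have h2 : wordLength S (a⁻¹ * g ^ (m * j)) ≤ wordLength S a⁻¹ + wordLength S (g ^ (m * j)) :=
      wordLength_mul_le S hgen _ _
    have := le_trans h1 (Nat.add_le_add_right h2 _)
    have h3 := (Nat.cast_le (α := ℝ)).mpr this
    push_cast at h3
    rw [hc1, hc2]
    push_cast
    linarith
  -- key inequality
  have hkey : ∀ j : ℕ, 1 ≤ j →
      (k : ℝ) / (lam * m) - C / (lam * m * j)
        ≤ (wordLength S (g ^ (m * j)) : ℝ) / ((m * j : ℕ) : ℝ) := by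
    intro j hj
    have hj0 : (0:ℝ) < (j : ℝ) := by exact_mod_cast hj
    have hm0 : (0:ℝ) < (m : ℝ) := by exact_mod_cast hm
    set W : ℝ := (wordLength S (g ^ (m * j)) : ℝ) with hW
    have h1 : (j : ℝ) * (k : ℝ) ≤ (j : ℝ) * (wordLength S ω : ℝ) :=
      mul_le_mul_of_nonneg_left hlen (le_of_lt hj0)
    have h2 := hquasi j hj
    have h3 := hWbound j
    have h4 : (j : ℝ) * (k : ℝ) - C ≤ lam * W := by
      have := mul_le_mul_of_nonneg_left h3 (le_of_lt hlam0)
      rw [hC]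
      nlinarith
    have h5 : ((j : ℝ) * (k : ℝ) - C) / lam ≤ W := by
      rw [div_le_iff₀ hlam0]
      linarith
    have h6 : ((j : ℝ) * (k : ℝ) - C) / lam / ((m : ℝ) * j) ≤ W / ((m : ℝ) * j) := by
      gcongr
    have heq : ((j : ℝ) * (k : ℝ) - C) / lam / ((m : ℝ) * j)
        = (k : ℝ) / (lam * m) - C / (lam * m * j) := by
      field_simp
    rw [heq] at h6
    have hcast : ((m * j : ℕ) : ℝ) = (m : ℝ) * j := by push_cast; ring
    rw [hcast]
    exact h6
  -- subsequence tendsto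
  have hsub : Tendsto (fun j : ℕ => (wordLength S (g ^ (m * j)) : ℝ) / ((m * j : ℕ) : ℝ))
      atTop (𝓝 l) := by
    have hmono : Tendsto (fun j : ℕ => m * j) atTop atTop :=
      tendsto_atTop_mono (fun j => Nat.le_mul_of_pos_left j hm) tendsto_id
    exact hl.comp hmono
  -- lower bound tendsto
  have hlb : Tendsto (fun j : ℕ => (k : ℝ) / (lam * m) - C / (lam * m * j)) atTop
      (𝓝 ((k : ℝ) / (lam * m))) := by
    have h0 : Tendsto (fun j : ℕ => C / (lam * m * j)) atTop (𝓝 0) := by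
      have : (fun j : ℕ => C / (lam * m * j)) = fun j : ℕ => (C / (lam * m)) * (1 / j) := by
        funext j; rw [div_mul_eq_div_div]; ring
      rw [this]
      simpa using (tendsto_one_div_atTop_nhds_zero_nat.const_mul (C / (lam * m)))
    simpa using (tendsto_const_nhds (x := (k : ℝ) / (lam * m)) (f := atTop)).sub h0
  exact le_of_tendsto_of_tendsto hlb hsub (Filter.eventually_atTop.2 ⟨1, hkey⟩)
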